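/- Let s ∈ ℕ. There exists a constant C > 0, depending only on s, with the following property: for all α, a ∈ ℝ, all K > 0, every integer N ≥ 1, and every trigonometric polynomial f(x) = Σ_{k∈Λ} c_k e^{2πikx} whose spectrum Λ is contained in {k ∈ ℤ : |k| ≤ N and |kα − 2a|_ℤ ≥ K⁻¹}, there exists a trigonometric polynomial Y with spectrum contained in Λ such that e^{−4πia} Y(x+α) − Y(x) + f(x) = 0 for all x ∈ ℝ, and ‖Y‖_{C^s} ≤ C K N^{s+1} sup_{x∈ℝ} |f(x)|. -/

import Mathlib

open Complex

/-- The distance from a real number to the nearest integer, `|t|_ℤ`. -/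
noncomputable def distInt (t : ℝ) : ℝ := |t - round t|

/-- The trigonometric polynomial with spectrum in the finite set `S` and coefficients `c`. -/
noncomputable def trig (S : Finset ℤ) (c : ℤ → ℂ) (x : ℝ) : ℂ :=
  ∑ k ∈ S, c k * Complex.exp (2 * Real.pi * Complex.I * k * x)

lemma key_lower (t : ℝ) :
    4 * distInt t ≤ ‖Complex.exp (2 * Real.pi * Complex.I * (t : ℂ)) - 1‖ := by
  set n : ℤ := round t with hn
  set u : ℝ := t - n with hu
  have hu2 : |u| ≤ 1 / 2 := abs_sub_round t
  have hsplit : Complex.exp (2 * Real.pi * Complex.I * (t : ℂ)) =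
      Complex.exp (((2 * Real.pi * u : ℝ) : ℂ) * Complex.I) := by
    rw [show (2 * (Real.pi : ℂ) * Complex.I * (t : ℂ)) =
        ((2 * Real.pi * u : ℝ) : ℂ) * Complex.I + (n : ℂ) * (2 * Real.pi * Complex.I) by
      push_cast [hu]; ring]
    rw [Complex.exp_add, Complex.exp_int_mul_two_pi_mul_I, mul_one]
  rw [hsplit]
  set θ : ℝ := 2 * Real.pi * u with hθ
  have hre : (Complex.exp ((θ : ℂ) * Complex.I) - 1).re = Real.cos θ - 1 := by
    simp [Complex.exp_ofReal_mul_I_re]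
  have him : (Complex.exp ((θ : ℂ) * Complex.I) - 1).im = Real.sin θ := by
    simp [Complex.exp_ofReal_mul_I_im]
  have hnsq : ‖Complex.exp ((θ : ℂ) * Complex.I) - 1‖ ^ 2 = 2 - 2 * Real.cos θ := by
    rw [Complex.sq_norm, Complex.normSq_apply, hre, him]
    nlinarith [Real.sin_sq_add_cos_sq θ]
  have hsin : 2 * |u| ≤ |Real.sin (Real.pi * u)| := by
    have habs : |Real.pi * u| ≤ Real.pi / 2 := by
      rw [abs_mul, abs_of_pos Real.pi_pos]
      nlinarith [Real.pi_pos]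
    have h := Real.mul_abs_le_abs_sin habs
    rw [abs_mul, abs_of_pos Real.pi_pos] at h
    have hπ : Real.pi ≠ 0 := Real.pi_ne_zero
    calc 2 * |u| = 2 / Real.pi * (Real.pi * |u|) := by field_simp
    _ ≤ |Real.sin (Real.pi * u)| := h
  have hcos : 2 - 2 * Real.cos θ = 4 * Real.sin (Real.pi * u) ^ 2 := by
    have h := Real.sin_sq_eq_half_sub (Real.pi * u)
    have h2 : 2 * (Real.pi * u) = θ := by rw [hθ]; ring
    rw [h2] at h
    linarith
  have hdist : distInt t = |u| := rfl
  rw [hdist]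
  have hA : 0 ≤ ‖Complex.exp ((θ : ℂ) * Complex.I) - 1‖ := norm_nonneg _
  nlinarith [_root_.sq_abs (Real.sin (Real.pi * u)), abs_nonneg u,
    abs_nonneg (Real.sin (Real.pi * u)),
    sq_nonneg (‖Complex.exp ((θ : ℂ) * Complex.I) - 1‖ - 4 * |u|)]

lemma exp_hasDerivAt (m : ℂ) (x : ℝ) :
    HasDerivAt (fun x : ℝ => Complex.exp (m * x)) (m * Complex.exp (m * x)) x := by
  have h : HasDerivAt (fun w : ℂ => Complex.exp (m * w))
      (Complex.exp (m * (x : ℂ)) * (m * 1)) (x : ℂ) :=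
    ((hasDerivAt_id (x : ℂ)).const_mul m).cexp
  have := h.comp_ofReal
  simpa [mul_comm] using this

lemma norm_exp_eq_one (k : ℤ) (x : ℝ) :
    ‖Complex.exp (2 * Real.pi * Complex.I * (k : ℂ) * (x : ℂ))‖ = 1 := by
  rw [show (2 * (Real.pi:ℂ) * Complex.I * (k : ℂ) * (x : ℂ)) =
      ((2 * Real.pi * k * x : ℝ) : ℂ) * Complex.I by push_cast; ring]
  rw [Complex.norm_exp_ofReal_mul_I]

lemma trig_iteratedDeriv (Λ : Finset ℤ) (c : ℤ → ℂ) (σ : ℕ) (x : ℝ) :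
    iteratedDeriv σ (trig Λ c) x =
      ∑ k ∈ Λ, c k * (2 * Real.pi * Complex.I * (k : ℂ)) ^ σ *
        Complex.exp (2 * Real.pi * Complex.I * (k : ℂ) * (x : ℂ)) := by
  induction σ generalizing x with
  | zero => simp [trig]
  | succ σ ih =>
    rw [iteratedDeriv_succ]
    have hE : iteratedDeriv σ (trig Λ c) = fun y : ℝ =>
        ∑ k ∈ Λ, c k * (2 * Real.pi * Complex.I * (k : ℂ)) ^ σ *
          Complex.exp (2 * Real.pi * Complex.I * (k : ℂ) * (y : ℂ)) := funext fun y => ih y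
    rw [hE]
    have h : HasDerivAt (fun y : ℝ =>
        ∑ k ∈ Λ, c k * (2 * Real.pi * Complex.I * (k : ℂ)) ^ σ *
          Complex.exp (2 * Real.pi * Complex.I * (k : ℂ) * (y : ℂ)))
        (∑ k ∈ Λ, c k * (2 * Real.pi * Complex.I * (k : ℂ)) ^ σ *
          ((2 * Real.pi * Complex.I * (k : ℂ)) *
            Complex.exp (2 * Real.pi * Complex.I * (k : ℂ) * (x : ℂ)))) x :=
      HasDerivAt.fun_sum fun k _ =>
        (exp_hasDerivAt (2 * Real.pi * Complex.I * (k : ℂ)) x).const_mul _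
    rw [h.deriv]
    exact Finset.sum_congr rfl fun k _ => by ring

lemma int_exp_integral {j k : ℤ} (hkj : k ≠ j) :
    ∫ x in (0:ℝ)..1,
      Complex.exp ((2 * Real.pi * Complex.I * ((k:ℂ) - j)) * (x:ℂ)) = 0 := by
  have hkj' : ((k : ℂ) - j) ≠ 0 := sub_ne_zero.2 (by exact_mod_cast hkj)
  have h1 : (2 * (Real.pi:ℂ) * Complex.I * ((k:ℂ) - j)) ≠ 0 := by
    simp [Real.pi_ne_zero, Complex.I_ne_zero, hkj']
  rw [integral_exp_mul_complex h1]
  rw [show (2 * (Real.pi:ℂ) * Complex.I * ((k:ℂ) - j)) * ((1:ℝ):ℂ) =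
      ((k - j : ℤ) : ℂ) * (2 * Real.pi * Complex.I) by push_cast; ring,
    Complex.exp_int_mul_two_pi_mul_I,
    show ((0:ℝ):ℂ) = 0 by norm_num, mul_zero, Complex.exp_zero, sub_self, zero_div]

lemma trig_coeff (Λ : Finset ℤ) (c : ℤ → ℂ) {j : ℤ} (hj : j ∈ Λ) :
    c j = ∫ x in (0:ℝ)..1, trig Λ c x *
      Complex.exp (-(2 * Real.pi * Complex.I * (j : ℂ)) * (x : ℂ)) := by
  have hrw : ∀ x : ℝ, trig Λ c x *
      Complex.exp (-(2 * Real.pi * Complex.I * (j : ℂ)) * (x : ℂ)) =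
      ∑ k ∈ Λ, c k * Complex.exp ((2 * Real.pi * Complex.I * ((k : ℂ) - j)) * (x : ℂ)) := by
    intro x
    simp only [trig]; rw [Finset.sum_mul]
    refine Finset.sum_congr rfl fun k _ => ?_
    rw [mul_assoc, ← Complex.exp_add]
    congr 1
    ring
  have step1 : (∫ x in (0:ℝ)..1, trig Λ c x *
      Complex.exp (-(2 * Real.pi * Complex.I * (j : ℂ)) * (x : ℂ))) =
      ∑ k ∈ Λ, ∫ x in (0:ℝ)..1,
        c k * Complex.exp ((2 * Real.pi * Complex.I * ((k : ℂ) - j)) * (x : ℂ)) := by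
    rw [intervalIntegral.integral_congr (g := fun x : ℝ =>
      ∑ k ∈ Λ, c k * Complex.exp ((2 * Real.pi * Complex.I * ((k : ℂ) - j)) * (x : ℂ)))
      (fun x _ => hrw x)]
    exact intervalIntegral.integral_finset_sum fun k _ =>
      (Continuous.intervalIntegrable (by fun_prop) _ _)
  have step2 : ∀ k ∈ Λ, (∫ x in (0:ℝ)..1,
      c k * Complex.exp ((2 * Real.pi * Complex.I * ((k : ℂ) - j)) * (x : ℂ))) =
      if k = j then c k else 0 := by
    intro k _
    rw [intervalIntegral.integral_const_mul]
    by_cases hkj : k = j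
    · subst hkj; simp
    · rw [int_exp_integral hkj, mul_zero, if_neg hkj]
  rw [step1, Finset.sum_congr rfl step2, Finset.sum_ite_eq' Λ j fun k => c k, if_pos hj]

theorem stmt12 (s : ℕ) :
    ∃ C : ℝ, 0 < C ∧
      ∀ α a K : ℝ, 0 < K →
      ∀ N : ℕ, 1 ≤ N →
      ∀ Λ : Finset ℤ, (∀ k ∈ Λ, |k| ≤ (N : ℤ) ∧ K⁻¹ ≤ distInt (k * α - 2 * a)) →
      ∀ c : ℤ → ℂ,
        ∃ d : ℤ → ℂ,
          (∀ x : ℝ,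
              Complex.exp (-(4 * Real.pi * Complex.I * a)) * trig Λ d (x + α) -
                  trig Λ d x + trig Λ c x = 0) ∧
          ∀ σ : ℕ, σ ≤ s → ∀ x : ℝ,
            ‖iteratedDeriv σ (trig Λ d) x‖ ≤
              C * K * (N : ℝ) ^ (s + 1) * ⨆ y : ℝ, ‖trig Λ c y‖ := by
  refine ⟨3 * (2 * Real.pi) ^ s, by positivity, ?_⟩
  intro α a K hK N hN Λ hΛ c
  set E : ℤ → ℂ := fun k =>
    Complex.exp (2 * Real.pi * Complex.I * (((k : ℝ) * α - 2 * a : ℝ) : ℂ)) with hE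
  have hEnorm : ∀ k ∈ Λ, 4 / K ≤ ‖1 - E k‖ := by
    intro k hk
    have h1 := key_lower ((k : ℝ) * α - 2 * a)
    have h2 := (hΛ k hk).2
    rw [norm_sub_rev]
    calc 4 / K = 4 * K⁻¹ := by ring
    _ ≤ 4 * distInt ((k : ℝ) * α - 2 * a) := by nlinarith
    _ ≤ ‖E k - 1‖ := h1
  have hEne : ∀ k ∈ Λ, (1 : ℂ) - E k ≠ 0 := by
    intro k hk
    have h := hEnorm k hk
    have h4K : 0 < 4 / K := by positivity
    intro h0
    rw [h0, norm_zero] at h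
    linarith
  refine ⟨fun k => c k / (1 - E k), ?_, ?_⟩
  · intro x
    simp only [trig]
    rw [Finset.mul_sum, ← Finset.sum_sub_distrib, ← Finset.sum_add_distrib]
    refine Finset.sum_eq_zero fun k hk => ?_
    have hexp : Complex.exp (-(4 * Real.pi * Complex.I * a)) *
        Complex.exp (2 * Real.pi * Complex.I * (k : ℂ) * ((x + α : ℝ) : ℂ)) =
        E k * Complex.exp (2 * Real.pi * Complex.I * (k : ℂ) * (x : ℂ)) := by
      rw [hE, ← Complex.exp_add, ← Complex.exp_add]
      congr 1
      push_cast
      ring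
    have hd : (c k / (1 - E k)) * E k - (c k / (1 - E k)) + c k = 0 := by
      field_simp [hEne k hk]
      ring
    calc Complex.exp (-(4 * Real.pi * Complex.I * a)) *
          (c k / (1 - E k) * Complex.exp (2 * Real.pi * Complex.I * (k : ℂ) * ((x + α : ℝ) : ℂ))) -
          c k / (1 - E k) * Complex.exp (2 * Real.pi * Complex.I * (k : ℂ) * (x : ℂ)) +
          c k * Complex.exp (2 * Real.pi * Complex.I * (k : ℂ) * (x : ℂ))
        = Complex.exp (2 * Real.pi * Complex.I * (k : ℂ) * (x : ℂ)) *
          ((c k / (1 - E k)) * E k - (c k / (1 - E k)) + c k) := by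
          rw [show Complex.exp (-(4 * Real.pi * Complex.I * a)) *
            (c k / (1 - E k) * Complex.exp (2 * Real.pi * Complex.I * (k : ℂ) * ((x + α : ℝ) : ℂ)))
            = c k / (1 - E k) * (Complex.exp (-(4 * Real.pi * Complex.I * a)) *
              Complex.exp (2 * Real.pi * Complex.I * (k : ℂ) * ((x + α : ℝ) : ℂ))) by ring, hexp]
          ring
    _ = 0 := by rw [hd, mul_zero]
  · intro σ hσ x
    have hbdd : BddAbove (Set.range fun y : ℝ => ‖trig Λ c y‖) := by
      refine ⟨∑ k ∈ Λ, ‖c k‖, ?_⟩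
      rintro _ ⟨y, rfl⟩
      simp only [trig]
      refine (norm_sum_le _ _).trans (Finset.sum_le_sum fun k _ => ?_)
      rw [norm_mul, norm_exp_eq_one k y, mul_one]
    set M : ℝ := ⨆ y : ℝ, ‖trig Λ c y‖ with hM
    have hMle : ∀ y : ℝ, ‖trig Λ c y‖ ≤ M := fun y => le_ciSup hbdd y
    have hM0 : 0 ≤ M := (norm_nonneg _).trans (hMle 0)
    have hcM : ∀ k ∈ Λ, ‖c k‖ ≤ M := by
      intro k hk
      rw [trig_coeff Λ c hk]
      have h := intervalIntegral.norm_integral_le_of_norm_le_const (C := M)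
        (a := (0:ℝ)) (b := 1)
        (f := fun x => trig Λ c x *
          Complex.exp (-(2 * Real.pi * Complex.I * (k : ℂ)) * (x : ℂ)))
        (fun x _ => by
          rw [norm_mul]
          have h1 : ‖Complex.exp (-(2 * Real.pi * Complex.I * (k : ℂ)) * (x : ℂ))‖ = 1 := by
            rw [show (-(2 * (Real.pi:ℂ) * Complex.I * (k : ℂ)) * (x : ℂ)) =
              2 * Real.pi * Complex.I * ((-k : ℤ) : ℂ) * (x : ℂ) by push_cast; ring]
            exact norm_exp_eq_one (-k) x
          rw [h1, mul_one]
          exact hMle x)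
      simpa using h
    have hdM : ∀ k ∈ Λ, ‖c k / (1 - E k)‖ ≤ K / 4 * M := by
      intro k hk
      rw [norm_div]
      have h4K : (0:ℝ) < 4 / K := by positivity
      calc ‖c k‖ / ‖(1:ℂ) - E k‖ ≤ M / (4 / K) :=
            div_le_div₀ hM0 (hcM k hk) h4K (hEnorm k hk)
      _ = K / 4 * M := by field_simp
    have hmk : ∀ k ∈ Λ, ‖(2 * (Real.pi:ℂ) * Complex.I * (k : ℂ))‖ ≤ 2 * Real.pi * N := by
      intro k hk
      have hkN : |(k:ℝ)| ≤ (N:ℝ) := by exact_mod_cast (hΛ k hk).1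
      have heq : ‖(2 * (Real.pi:ℂ) * Complex.I * (k : ℂ))‖ = 2 * Real.pi * |(k:ℝ)| := by
        rw [show ((k:ℂ)) = (((k:ℝ)):ℂ) by push_cast; ring]
        simp [norm_mul, Complex.norm_real, Real.norm_eq_abs, abs_of_pos Real.pi_pos]
      rw [heq]
      nlinarith [Real.pi_pos]
    rw [trig_iteratedDeriv]
    have hterm : ∀ k ∈ Λ, ‖c k / (1 - E k) * (2 * Real.pi * Complex.I * (k : ℂ)) ^ σ *
        Complex.exp (2 * Real.pi * Complex.I * (k : ℂ) * (x : ℂ))‖ ≤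
        K / 4 * M * (2 * Real.pi * N) ^ σ := by
      intro k hk
      rw [norm_mul, norm_mul, norm_exp_eq_one k x, mul_one, norm_pow]
      have h1 := hdM k hk
      have h2 : ‖(2 * (Real.pi:ℂ) * Complex.I * (k : ℂ))‖ ^ σ ≤ (2 * Real.pi * N) ^ σ :=
        pow_le_pow_left₀ (norm_nonneg _) (hmk k hk) σ
      have h3 : 0 ≤ ‖(2 * (Real.pi:ℂ) * Complex.I * (k : ℂ))‖ ^ σ := by positivity
      have h4 : 0 ≤ K / 4 * M := by positivity
      exact mul_le_mul h1 h2 h3 h4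
    have hcard : (Λ.card : ℝ) ≤ 2 * N + 1 := by
      have hsub : Λ ⊆ Finset.Icc (-(N:ℤ)) N := fun k hk => Finset.mem_Icc.2 (abs_le.1 (hΛ k hk).1)
      have h := Finset.card_le_card hsub
      rw [Int.card_Icc] at h
      have h2 : ((N:ℤ) + 1 - -(N:ℤ)).toNat = 2 * N + 1 := by omega
      rw [h2] at h
      exact_mod_cast h
    have hN1 : (1:ℝ) ≤ N := by exact_mod_cast hN
    have hpow : (2 * Real.pi * N) ^ σ ≤ (2 * Real.pi) ^ s * (N:ℝ) ^ s := by
      have h1 : (1:ℝ) ≤ 2 * Real.pi * N := by nlinarith [Real.pi_gt_three]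
      calc (2 * Real.pi * N) ^ σ ≤ (2 * Real.pi * N) ^ s := pow_le_pow_right₀ h1 hσ
      _ = (2 * Real.pi) ^ s * (N:ℝ) ^ s := mul_pow _ _ _
    have hY : (0:ℝ) ≤ K / 4 * M * ((2 * Real.pi) ^ s * (N:ℝ) ^ s) :=
      mul_nonneg (mul_nonneg (by positivity) hM0) (by positivity)
    have hX : (0:ℝ) ≤ K * M * ((2 * Real.pi) ^ s * (N:ℝ) ^ s) * N :=
      mul_nonneg (mul_nonneg (mul_nonneg hK.le hM0) (by positivity)) (by positivity)
    calc ‖∑ k ∈ Λ, c k / (1 - E k) * (2 * Real.pi * Complex.I * (k : ℂ)) ^ σ *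
          Complex.exp (2 * Real.pi * Complex.I * (k : ℂ) * (x : ℂ))‖
        ≤ ∑ _k ∈ Λ, (K / 4 * M * (2 * Real.pi * N) ^ σ) :=
          (norm_sum_le _ _).trans (Finset.sum_le_sum hterm)
    _ = (Λ.card : ℝ) * (K / 4 * M * (2 * Real.pi * N) ^ σ) := by
          rw [Finset.sum_const, nsmul_eq_mul]
    _ ≤ (2 * N + 1) * (K / 4 * M * ((2 * Real.pi) ^ s * (N:ℝ) ^ s)) := by
          have h1 : K / 4 * M * (2 * Real.pi * N) ^ σ ≤
              K / 4 * M * ((2 * Real.pi) ^ s * (N:ℝ) ^ s) :=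
            mul_le_mul_of_nonneg_left hpow (mul_nonneg (by positivity) hM0)
          have h2 : (0:ℝ) ≤ K / 4 * M * (2 * Real.pi * N) ^ σ :=
            mul_nonneg (mul_nonneg (by positivity) hM0) (by positivity)
          exact mul_le_mul hcard h1 h2 (by positivity)
    _ ≤ 3 * (N:ℝ) * (K / 4 * M * ((2 * Real.pi) ^ s * (N:ℝ) ^ s)) :=
          mul_le_mul_of_nonneg_right (by linarith) hY
    _ ≤ 3 * (2 * Real.pi) ^ s * K * (N:ℝ) ^ (s + 1) * M := by
          rw [pow_succ]
          nlinarith [hX]
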